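/- Let p be a prime, n, m positive integers, F, G : F_{p^n} → F_{p^m}, and c ∈ F_{p^m}. Then for all b ∈ F_{p^m} and all x, u ∈ F_{p^n}: (i) ∑_{u ∈ F_{p^n}} cC_{F,G}(u,b)·ζ_p^{−Tr_n(u·x)} = W_F(x,b)·conj(W_G(x,b·c)), and (ii) cC_{F,G}(u,b) = p^{−n}·∑_{x ∈ F_{p^n}} W_F(x,b)·conj(W_G(x,b·c))·ζ_p^{Tr_n(u·x)}. -/

import Mathlib

open Finset

noncomputable section

/-- Finite fields `GaloisField p n` are finite; fix a `Fintype` instance. -/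
noncomputable instance (p n : ℕ) [Fact p.Prime] : Fintype (GaloisField p n) :=
  Fintype.ofFinite _

/-- `ζ_q = exp(2πi/q)`. -/
noncomputable def zetaC (q : ℕ) : ℂ := Complex.exp (2 * Real.pi * Complex.I / q)

/-- `ζ_p^t` for `t ∈ F_p`, computed via the integer lift of `t`. -/
noncomputable def eChar (p : ℕ) (t : ZMod p) : ℂ := zetaC p ^ t.val

/-- The absolute trace `Tr_k : F_{p^k} → F_p`. -/
noncomputable def trAbs (p k : ℕ) [Fact p.Prime] (x : GaloisField p k) : ZMod p :=
  Algebra.trace (ZMod p) (GaloisField p k) x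

/-- The Walsh transform `W_F(a,b) = ∑_x ζ_p^{Tr_m(b·F(x)) − Tr_n(a·x)}`. -/
noncomputable def Walsh (p n m : ℕ) [Fact p.Prime] (F : GaloisField p n → GaloisField p m)
    (a : GaloisField p n) (b : GaloisField p m) : ℂ :=
  ∑ x : GaloisField p n, eChar p (trAbs p m (b * F x) - trAbs p n (a * x))

/-- The `c`-crosscorrelation `cC_{F,G}(u,b) = ∑_z ζ_p^{Tr_m(b(F(z+u) − c·G(z)))}`. -/
noncomputable def crossCorr (p n m : ℕ) [Fact p.Prime]
    (F G : GaloisField p n → GaloisField p m) (c : GaloisField p m)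
    (u : GaloisField p n) (b : GaloisField p m) : ℂ :=
  ∑ x : GaloisField p n, eChar p (trAbs p m (b * (F (x + u) - c * G x)))

/-- The `c`-autocorrelation `cC_F = cC_{F,F}`. -/
noncomputable def autoCorr (p n m : ℕ) [Fact p.Prime]
    (F : GaloisField p n → GaloisField p m) (c : GaloisField p m)
    (u : GaloisField p n) (b : GaloisField p m) : ℂ :=
  crossCorr p n m F F c u b

/-- `F` is perfect₁ `c`-nonlinear: `cC_F(u,b) = 0` for all `u ≠ 0`, `b ≠ 0`. -/
def PerfectCNonlinear1 (p n m : ℕ) [Fact p.Prime]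
    (F : GaloisField p n → GaloisField p m) (c : GaloisField p m) : Prop :=
  ∀ u : GaloisField p n, u ≠ 0 → ∀ b : GaloisField p m, b ≠ 0 →
    autoCorr p n m F c u b = 0

/-- `F` is strictly perfect₁ `c`-nonlinear: `cC_F(u,b) = 0` for all `u`, all `b ≠ 0`. -/
def StrictlyPerfectCNonlinear1 (p n m : ℕ) [Fact p.Prime]
    (F : GaloisField p n → GaloisField p m) (c : GaloisField p m) : Prop :=
  ∀ u : GaloisField p n, ∀ b : GaloisField p m, b ≠ 0 →
    autoCorr p n m F c u b = 0

/-- `F` is `c`-differential bent₁: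
`W_F(x,b)·conj(W_F(x,bc)) = cC_F(0,b)` for all `x` and all `b ≠ 0`. -/
def CDifferentialBent1 (p n m : ℕ) [Fact p.Prime]
    (F : GaloisField p n → GaloisField p m) (c : GaloisField p m) : Prop :=
  ∀ x : GaloisField p n, ∀ b : GaloisField p m, b ≠ 0 →
    Walsh p n m F x b * (starRingEnd ℂ) (Walsh p n m F x (b * c)) =
      autoCorr p n m F c 0 b

section Helpers

variable (p : ℕ) [Fact p.Prime]

lemma zetaC_pow_p : zetaC p ^ p = 1 :=
  (Complex.isPrimitiveRoot_exp p (Fact.out (p := p.Prime)).ne_zero).pow_eq_one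

lemma eChar_zero : eChar p 0 = 1 := by
  haveI : NeZero p := ⟨(Fact.out (p := p.Prime)).ne_zero⟩
  simp [eChar]

lemma eChar_add (s t : ZMod p) : eChar p (s + t) = eChar p s * eChar p t := by
  haveI : NeZero p := ⟨(Fact.out (p := p.Prime)).ne_zero⟩
  unfold eChar
  rw [← pow_add, ZMod.val_add]
  conv_rhs => rw [← Nat.div_add_mod (s.val + t.val) p]
  rw [pow_add, pow_mul, zetaC_pow_p, one_pow, one_mul]

lemma eChar_eq_one_iff (t : ZMod p) : eChar p t = 1 ↔ t = 0 := by
  haveI : NeZero p := ⟨(Fact.out (p := p.Prime)).ne_zero⟩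
  have hprim := Complex.isPrimitiveRoot_exp p (Fact.out (p := p.Prime)).ne_zero
  rw [show eChar p t = Complex.exp (2 * Real.pi * Complex.I / p) ^ t.val from rfl,
    hprim.pow_eq_one_iff_dvd, ← ZMod.val_eq_zero]
  constructor
  · intro h
    by_contra hne
    exact absurd (Nat.le_of_dvd (Nat.pos_of_ne_zero hne) h) (not_le.mpr (ZMod.val_lt t))
  · intro h; rw [h]; exact dvd_zero p

lemma conj_eChar (t : ZMod p) : (starRingEnd ℂ) (eChar p t) = eChar p (-t) := by
  have h1 : eChar p t * eChar p (-t) = 1 := by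
    rw [← eChar_add, add_neg_cancel, eChar_zero]
  have habs : ‖eChar p t‖ = 1 := by
    have h := congrArg norm (zetaC_pow_p p)
    rw [norm_pow, norm_one] at h
    have : ‖zetaC p‖ = 1 :=
      Complex.norm_eq_one_of_pow_eq_one (zetaC_pow_p p) (Fact.out (p := p.Prime)).ne_zero
    simp [eChar, norm_pow, this]
  have h2 : (starRingEnd ℂ) (eChar p t) * eChar p t = 1 := by
    rw [mul_comm, Complex.mul_conj, ← Complex.sq_norm, habs]
    norm_num
  calc (starRingEnd ℂ) (eChar p t)
      = (starRingEnd ℂ) (eChar p t) * (eChar p t * eChar p (-t)) := by rw [h1, mul_one]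
    _ = ((starRingEnd ℂ) (eChar p t) * eChar p t) * eChar p (-t) := by ring
    _ = eChar p (-t) := by rw [h2, one_mul]

end Helpers
section Orth

variable (p : ℕ) [Fact p.Prime]

lemma trAbs_add (k : ℕ) (x y : GaloisField p k) :
    trAbs p k (x + y) = trAbs p k x + trAbs p k y := by
  unfold trAbs; exact map_add _ x y

lemma sum_eChar_tr_ne (n : ℕ) (a : GaloisField p n) (ha : a ≠ 0) :
    ∑ x : GaloisField p n, eChar p (trAbs p n (a * x)) = 0 := by
  obtain ⟨y, hy⟩ : ∃ y, trAbs p n (a * y) ≠ 0 := by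
    by_contra hf
    push_neg at hf
    exact ha ((traceForm_nondegenerate (ZMod p) (GaloisField p n)).1 a
      (by simpa [Algebra.traceForm_apply, trAbs] using hf))
  set S := ∑ x : GaloisField p n, eChar p (trAbs p n (a * x)) with hS
  have key : eChar p (trAbs p n (a * y)) * S = S := by
    rw [hS, Finset.mul_sum]
    calc ∑ x : GaloisField p n, eChar p (trAbs p n (a * y)) * eChar p (trAbs p n (a * x))
        = ∑ x : GaloisField p n, eChar p (trAbs p n (a * (y + x))) := by
          refine Finset.sum_congr rfl fun x _ => ?_
          rw [← eChar_add]
          congr 1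
          rw [mul_add, trAbs_add]
      _ = S := Fintype.sum_equiv (Equiv.addLeft y) _ _ (fun x => rfl)
  have h1 : eChar p (trAbs p n (a * y)) ≠ 1 := fun h => hy ((eChar_eq_one_iff p _).mp h)
  have := sub_eq_zero.mpr key
  rw [← sub_one_mul] at this
  rcases mul_eq_zero.mp this with h | h
  · exact absurd (sub_eq_zero.mp h) h1
  · exact h

open scoped Classical in
lemma sum_eChar_tr (n : ℕ) (hn : n ≠ 0) (a : GaloisField p n) :
    ∑ x : GaloisField p n, eChar p (trAbs p n (a * x)) =
      if a = 0 then ((p : ℂ) ^ n) else 0 := by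
  split_ifs with h
  · subst h
    have hcard : Fintype.card (GaloisField p n) = p ^ n := by
      rw [← Nat.card_eq_fintype_card, GaloisField.card p n hn]
    simp only [zero_mul]
    rw [show trAbs p n (0 : GaloisField p n) = 0 by unfold trAbs; exact map_zero _,
      eChar_zero, Finset.sum_const, Finset.card_univ, hcard, nsmul_eq_mul, mul_one]
    push_cast; ring
  · exact sum_eChar_tr_ne p n a h

end Orth
lemma crossCorr_fourier (p n m : ℕ) [Fact p.Prime]
    (F G : GaloisField p n → GaloisField p m) (c : GaloisField p m)
    (b : GaloisField p m) (x : GaloisField p n) :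
    ∑ u' : GaloisField p n,
        crossCorr p n m F G c u' b * eChar p (-(trAbs p n (u' * x))) =
      Walsh p n m F x b * (starRingEnd ℂ) (Walsh p n m G x (b * c)) := by
  have targ : ∀ (w z' : GaloisField p n),
      trAbs p m (b * (F w - c * G z')) =
        trAbs p m (b * F w) - trAbs p m (b * c * G z') := by
    intro w z'; unfold trAbs
    rw [show b * (F w - c * G z') = b * F w - b * c * G z' by ring, map_sub]
  have tnarg : ∀ (z' u' : GaloisField p n),
      trAbs p n (x * (z' + u')) = trAbs p n (x * z') + trAbs p n (u' * x) := by
    intro z' u'; unfold trAbs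
    rw [show x * (z' + u') = x * z' + u' * x by ring, map_add]
  calc ∑ u' : GaloisField p n,
        crossCorr p n m F G c u' b * eChar p (-(trAbs p n (u' * x)))
      = ∑ u' : GaloisField p n, ∑ z : GaloisField p n,
          eChar p (trAbs p m (b * (F (z + u') - c * G z))) *
            eChar p (-(trAbs p n (u' * x))) := by
        simp only [crossCorr, Finset.sum_mul]
    _ = ∑ z : GaloisField p n, ∑ u' : GaloisField p n,
          eChar p (trAbs p m (b * F (z + u')) - trAbs p n (x * (z + u'))) *
            (starRingEnd ℂ) (eChar p (trAbs p m (b * c * G z) - trAbs p n (x * z))) := by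
        rw [Finset.sum_comm]
        refine Finset.sum_congr rfl fun z _ => Finset.sum_congr rfl fun u' _ => ?_
        rw [conj_eChar, ← eChar_add, ← eChar_add]
        congr 1
        rw [targ, tnarg]
        ring
    _ = ∑ z : GaloisField p n,
          (∑ w : GaloisField p n,
            eChar p (trAbs p m (b * F w) - trAbs p n (x * w))) *
            (starRingEnd ℂ) (eChar p (trAbs p m (b * c * G z) - trAbs p n (x * z))) := by
        refine Finset.sum_congr rfl fun z _ => ?_
        rw [Finset.sum_mul]
        exact Fintype.sum_equiv (Equiv.addLeft z) _ _ (fun u' => rfl)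
    _ = Walsh p n m F x b * (starRingEnd ℂ) (Walsh p n m G x (b * c)) := by
        rw [← Finset.mul_sum, Walsh, Walsh, map_sum]

theorem statement_0 (p n m : ℕ) [Fact p.Prime] (hn : 0 < n) (hm : 0 < m)
    (F G : GaloisField p n → GaloisField p m) (c : GaloisField p m)
    (b : GaloisField p m) (x u : GaloisField p n) :
    (∑ u' : GaloisField p n,
        crossCorr p n m F G c u' b * eChar p (-(trAbs p n (u' * x))) =
      Walsh p n m F x b * (starRingEnd ℂ) (Walsh p n m G x (b * c))) ∧
    crossCorr p n m F G c u b =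
      ((p : ℂ) ^ n)⁻¹ * ∑ x' : GaloisField p n,
        Walsh p n m F x' b * (starRingEnd ℂ) (Walsh p n m G x' (b * c)) *
          eChar p (trAbs p n (u * x')) := by
  classical
  refine ⟨crossCorr_fourier p n m F G c b x, ?_⟩
  have hpn : ((p : ℂ) ^ n) ≠ 0 :=
    pow_ne_zero _ (Nat.cast_ne_zero.mpr (Fact.out (p := p.Prime)).ne_zero)
  have hS : ∑ x' : GaloisField p n,
      Walsh p n m F x' b * (starRingEnd ℂ) (Walsh p n m G x' (b * c)) *
        eChar p (trAbs p n (u * x')) =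
      crossCorr p n m F G c u b * (p : ℂ) ^ n := by
    calc ∑ x' : GaloisField p n,
          Walsh p n m F x' b * (starRingEnd ℂ) (Walsh p n m G x' (b * c)) *
            eChar p (trAbs p n (u * x'))
        = ∑ x' : GaloisField p n, ∑ u' : GaloisField p n,
            crossCorr p n m F G c u' b * eChar p (-(trAbs p n (u' * x'))) *
              eChar p (trAbs p n (u * x')) := by
          refine Finset.sum_congr rfl fun x' _ => ?_
          rw [← crossCorr_fourier p n m F G c b x', Finset.sum_mul]
      _ = ∑ u' : GaloisField p n, ∑ x' : GaloisField p n,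
            crossCorr p n m F G c u' b * eChar p (trAbs p n ((u - u') * x')) := by
          rw [Finset.sum_comm]
          refine Finset.sum_congr rfl fun u' _ => Finset.sum_congr rfl fun x' _ => ?_
          rw [mul_assoc, ← eChar_add]
          congr 2
          unfold trAbs
          rw [show (u - u') * x' = u * x' - u' * x' by ring, map_sub]
          ring
      _ = ∑ u' : GaloisField p n,
            crossCorr p n m F G c u' b *
              (if u - u' = 0 then ((p : ℂ) ^ n) else 0) := by
          refine Finset.sum_congr rfl fun u' _ => ?_
          rw [← Finset.mul_sum, sum_eChar_tr p n hn.ne' (u - u')]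
      _ = crossCorr p n m F G c u b * (p : ℂ) ^ n := by
          rw [Finset.sum_eq_single u]
          · simp
          · intro u' _ hne
            rw [if_neg (fun h => hne (sub_eq_zero.mp h).symm), mul_zero]
          · intro h; exact absurd (Finset.mem_univ u) h
  rw [hS, mul_comm (crossCorr p n m F G c u b) _, ← mul_assoc,
    inv_mul_cancel₀ hpn, one_mul]
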